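/- arXiv:2004.04508 — 2 statements merged into one kernel-verified Lean document; each statement's English description precedes it below -/
import Mathlib

section
/- (At a generic cocharacter, bounded coincides with bounded-and-proper.) Let W ⊆ ℝ^E be a linear subspace and z ∈ ℝ^E a parameter such that ⟨z, χ⟩ ≠ 0 for every cocircuit χ (i.e. every circuit of Wᗮ). Then for every sign vector α : E → {+1,−1}: the functional u ↦ ⟨z,u⟩ is bounded above on the cone C_α := { u ∈ Wᗮ : α(e)·u(e) ≥ 0 for all e ∈ E } if and only if ⟨z, u⟩ < 0 for every nonzero u ∈ C_α (equivalently, ⟨z,·⟩ is bounded above and proper on C_α). -/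
/-- The standard inner product on `ℝ^E`. -/
noncomputable def dot {E : Type*} [Fintype E] (x y : E → ℝ) : ℝ := ∑ e, x e * y e

/-- The orthogonal complement of a subspace `W ⊆ ℝ^E` with respect to the
standard inner product. -/
def perp {E : Type*} [Fintype E] (W : Submodule ℝ (E → ℝ)) : Set (E → ℝ) :=
  {u | ∀ w ∈ W, dot w u = 0}

/-- The cone `C_α := { u ∈ Wᗮ : α e * u e ≥ 0 for all e }`. -/
def cone {E : Type*} [Fintype E] (W : Submodule ℝ (E → ℝ)) (α : E → ℝ) : Set (E → ℝ) :=
  {u | u ∈ perp W ∧ ∀ e, 0 ≤ α e * u e}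

/-- A circuit of a subset `U ⊆ ℝ^E` is a nonzero element of `U` whose support is
minimal under inclusion among supports of nonzero elements of `U`. -/
def IsCircuit {E : Type*} [Fintype E] (U : Set (E → ℝ)) (u : E → ℝ) : Prop :=
  u ∈ U ∧ u ≠ 0 ∧
    ∀ w ∈ U, w ≠ 0 → {e | w e ≠ 0} ⊆ {e | u e ≠ 0} → {e | w e ≠ 0} = {e | u e ≠ 0}

open Classical in
lemma dot_smul_right' {E : Type*} [Fintype E] (x y : E → ℝ) (c : ℝ) :
    dot x (c • y) = c * dot x y := by
  simp [dot, Finset.mul_sum, mul_left_comm]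

lemma dot_add_right' {E : Type*} [Fintype E] (x y y' : E → ℝ) :
    dot x (y + y') = dot x y + dot x y' := by
  simp [dot, Finset.sum_add_distrib, mul_add]

lemma dot_neg_right' {E : Type*} [Fintype E] (x y : E → ℝ) :
    dot x (-y) = -dot x y := by
  simp [dot, Finset.sum_neg_distrib]

lemma exists_circuit_subset {E : Type*} [Fintype E] (U : Set (E → ℝ)) (u : E → ℝ)
    (hu : u ∈ U) (hne : u ≠ 0) :
    ∃ χ, IsCircuit U χ ∧ {e | χ e ≠ 0} ⊆ {e | u e ≠ 0} := by
  classical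
  have hP : ∃ n, ∃ w, w ∈ U ∧ w ≠ 0 ∧ {e | w e ≠ 0} ⊆ {e | u e ≠ 0} ∧
      {e | w e ≠ 0}.ncard = n := ⟨_, u, hu, hne, subset_rfl, rfl⟩
  obtain ⟨w, hwU, hwne, hwsub, hwcard⟩ := Nat.find_spec hP
  refine ⟨w, ⟨hwU, hwne, ?_⟩, hwsub⟩
  intro v hvU hvne hvsub
  have hle : Nat.find hP ≤ {e | v e ≠ 0}.ncard :=
    Nat.find_le ⟨v, hvU, hvne, hvsub.trans hwsub, rfl⟩
  refine Set.eq_of_subset_of_ncard_le hvsub ?_ (Set.toFinite _)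
  omega

/-- At a generic cocharacter `z` (i.e. `⟨z, χ⟩ ≠ 0` for every cocircuit `χ`,
that is, every circuit of `Wᗮ`), `⟨z, ·⟩` is bounded above on the cone `C_α`
iff `⟨z, u⟩ < 0` for every nonzero `u ∈ C_α`. -/
theorem bounded_iff_strict_negative_of_generic {E : Type*} [Fintype E]
    (W : Submodule ℝ (E → ℝ)) (z : E → ℝ)
    (hgen : ∀ χ : E → ℝ, IsCircuit (perp W) χ → dot z χ ≠ 0)
    (α : E → ℝ) (hα : ∀ e, α e = 1 ∨ α e = -1) :
    BddAbove ((fun u => dot z u) '' cone W α) ↔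
      ∀ u ∈ cone W α, u ≠ 0 → dot z u < 0 := by
  classical
  constructor
  · intro hb u hu hune
    -- first: nonpositivity on the cone
    have hle : ∀ v ∈ cone W α, dot z v ≤ 0 := by
      intro v hv
      by_contra h
      push_neg at h
      obtain ⟨b, hbmem⟩ := hb
      obtain ⟨n, hn⟩ := exists_nat_gt (b / dot z v)
      have hcv : (n : ℝ) • v ∈ cone W α := by
        refine ⟨fun w hw => ?_, fun e => ?_⟩
        · rw [dot_smul_right', hv.1 w hw, mul_zero]
        · have h0 := hv.2 e
          have h1 : (0:ℝ) ≤ (n:ℝ) * (α e * v e) := by positivity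
          have h2 : α e * ((n:ℝ) • v) e = (n:ℝ) * (α e * v e) := by
            simp [Pi.smul_apply]; ring
          rw [h2]; exact h1
      have hmem : dot z ((n:ℝ) • v) ∈ (fun u => dot z u) '' cone W α :=
        ⟨_, hcv, rfl⟩
      have hb2 : dot z ((n:ℝ) • v) ≤ b := hbmem hmem
      rw [dot_smul_right'] at hb2
      have : b < (n:ℝ) * dot z v := by
        rwa [div_lt_iff₀ h] at hn
      linarith
    rcases lt_or_eq_of_le (hle u hu) with hlt | heq
    · exact hlt
    -- dot z u = 0 case: derive contradiction
    exfalso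
    obtain ⟨χ, hcirc, hsub⟩ := exists_circuit_subset (perp W) u hu.1 hune
    have hzχ := hgen χ hcirc
    set χ' : E → ℝ := if 0 < dot z χ then χ else -χ with hχ'def
    have hχ'perp : χ' ∈ perp W := by
      intro w hw
      have := hcirc.1 w hw
      by_cases h : 0 < dot z χ <;> simp [hχ'def, h, dot_neg_right', this]
    have hsupp : {e | χ' e ≠ 0} = {e | χ e ≠ 0} := by
      by_cases h : 0 < dot z χ <;> simp [hχ'def, h]
    have hdχ' : 0 < dot z χ' := by
      by_cases h : 0 < dot z χ
      · simpa [hχ'def, h] using h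
      · have : dot z χ < 0 := lt_of_le_of_ne (le_of_not_gt h) hzχ
        simp [hχ'def, h, dot_neg_right']
        linarith
    have hχ'ne : χ' ≠ 0 := by
      by_cases h : 0 < dot z χ
      · simpa [hχ'def, h] using hcirc.2.1
      · simp only [hχ'def, if_neg h, ne_eq, neg_eq_zero]
        exact hcirc.2.1
    -- the support of χ' as a Finset
    obtain ⟨e₀, he₀⟩ : ∃ e, χ' e ≠ 0 := Function.ne_iff.mp hχ'ne
    set S : Finset E := Finset.univ.filter (fun e => χ' e ≠ 0) with hSdef
    have hS : S.Nonempty := ⟨e₀, by simp [hSdef, he₀]⟩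
    have hmemS : ∀ e, e ∈ S ↔ χ' e ≠ 0 := by intro e; simp [hSdef]
    -- each e in S has α e * u e > 0
    have hpos : ∀ e ∈ S, 0 < α e * u e := by
      intro e he
      have hχe : χ' e ≠ 0 := (hmemS e).mp he
      have hχe2 : χ e ≠ 0 := (Set.ext_iff.mp hsupp e).mp hχe
      have hue : u e ≠ 0 := hsub hχe2
      have hαe : α e ≠ 0 := by rcases hα e with h | h <;> simp [h]
      exact lt_of_le_of_ne (hu.2 e) (Ne.symm (mul_ne_zero hαe hue))
    set m : ℝ := S.inf' hS (fun e => α e * u e) with hmdef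
    set M : ℝ := S.sup' hS (fun e => |χ' e|) with hMdef
    have hm : 0 < m := by
      rw [hmdef, Finset.lt_inf'_iff]
      exact hpos
    have hM : 0 < M := by
      have : |χ' e₀| ≤ M := Finset.le_sup' (fun e => |χ' e|) (by simp [hSdef, he₀])
      have h0 : 0 < |χ' e₀| := abs_pos.mpr he₀
      linarith
    set t : ℝ := m / M with htdef
    have ht : 0 < t := div_pos hm hM
    set v : E → ℝ := u + t • χ' with hvdef
    have hvc : v ∈ cone W α := by
      refine ⟨fun w hw => ?_, fun e => ?_⟩
      · rw [hvdef, dot_add_right', dot_smul_right', hu.1 w hw, hχ'perp w hw]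
        ring
      · have hve : v e = u e + t * χ' e := by simp [hvdef]
        rw [hve, mul_add]
        by_cases he : χ' e = 0
        · simpa [he] using hu.2 e
        · have heS : e ∈ S := (hmemS e).mpr he
          have h1 : m ≤ α e * u e := Finset.inf'_le _ heS
          have h2 : |χ' e| ≤ M := Finset.le_sup' (fun e => |χ' e|) heS
          have hαabs : |α e| = 1 := by rcases hα e with h | h <;> simp [h]
          have h3 : -(|χ' e|) ≤ α e * χ' e := by
            have := neg_abs_le (α e * χ' e)
            rwa [abs_mul, hαabs, one_mul] at this
          have h4 : α e * (t * χ' e) = t * (α e * χ' e) := by ring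
          have h5 : t * (α e * χ' e) ≥ -(t * |χ' e|) := by nlinarith
          have h6 : t * |χ' e| ≤ t * M := by nlinarith
          have h7 : t * M = m := by
            rw [htdef]; field_simp
          nlinarith
    have hdv : dot z v = t * dot z χ' := by
      rw [hvdef, dot_add_right', dot_smul_right', heq, zero_add]
    have : dot z v ≤ 0 := hle v hvc
    nlinarith
  · intro h
    refine ⟨0, ?_⟩
    rintro b ⟨u, hu, rfl⟩
    rcases eq_or_ne u 0 with rfl | hne
    · simp [dot]
    · exact le_of_lt (h u hu hne)
end

section
/- (The set of bounded chambers depends only on the equivariant chamber of the cocharacter.) Let W ⊆ ℝ^E be a linear subspace. If z₀ and z₁ belong to the same connected component of the set { z ∈ ℝ^E : ⟨z, χ⟩ ≠ 0 for every cocircuit χ (circuit of Wᗮ) } (the complement of the root hyperplanes χᗮ in 𝔱), then for every sign vector α : E → {+1,−1}, α is z₀-bounded if and only if α is z₁-bounded. -/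
/-- A sign vector `α` is `z`-bounded if `u ↦ ⟨z, u⟩` is bounded above on `C_α`. -/
def IsBoundedSV {E : Type*} [Fintype E] (W : Submodule ℝ (E → ℝ)) (z α : E → ℝ) : Prop :=
  BddAbove ((fun u => dot z u) '' cone W α)

section aux
variable {E : Type*} [Fintype E]

lemma dot_add_right (z u v : E → ℝ) : dot z (u + v) = dot z u + dot z v := by
  simp [dot, mul_add, Finset.sum_add_distrib]

lemma dot_smul_right (z u : E → ℝ) (t : ℝ) : dot z (t • u) = t * dot z u := by
  simp only [dot, Pi.smul_apply, smul_eq_mul, Finset.mul_sum]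
  exact Finset.sum_congr rfl fun e _ => by ring

lemma dot_neg_right (z u : E → ℝ) : dot z (-u) = -dot z u := by
  simp [dot, Finset.sum_neg_distrib]

lemma dot_zero_right (z : E → ℝ) : dot z 0 = 0 := by simp [dot]

lemma continuous_dot_left (u : E → ℝ) : Continuous fun z : E → ℝ => dot z u := by
  unfold dot
  exact continuous_finset_sum _ fun e _ => (continuous_apply e).mul continuous_const

lemma continuous_dot_right (z : E → ℝ) : Continuous fun u : E → ℝ => dot z u := by
  unfold dot
  exact continuous_finset_sum _ fun e _ => continuous_const.mul (continuous_apply e)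

lemma perp_add {W : Submodule ℝ (E → ℝ)} {u v : E → ℝ} (hu : u ∈ perp W) (hv : v ∈ perp W) :
    u + v ∈ perp W := fun w hw => by rw [dot_add_right, hu w hw, hv w hw, add_zero]

lemma perp_smul {W : Submodule ℝ (E → ℝ)} {u : E → ℝ} (t : ℝ) (hu : u ∈ perp W) :
    t • u ∈ perp W := fun w hw => by rw [dot_smul_right, hu w hw, mul_zero]

lemma perp_neg {W : Submodule ℝ (E → ℝ)} {u : E → ℝ} (hu : u ∈ perp W) :
    -u ∈ perp W := fun w hw => by rw [dot_neg_right, hu w hw, neg_zero]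

lemma zero_mem_cone (W : Submodule ℝ (E → ℝ)) (α : E → ℝ) : (0 : E → ℝ) ∈ cone W α :=
  ⟨fun w _ => by simp [dot], fun e => by simp⟩

lemma cone_smul {W : Submodule ℝ (E → ℝ)} {α : E → ℝ} {u : E → ℝ} {t : ℝ}
    (ht : 0 ≤ t) (hu : u ∈ cone W α) : t • u ∈ cone W α := by
  refine ⟨perp_smul t hu.1, fun e => ?_⟩
  have := hu.2 e
  have : 0 ≤ t * (α e * u e) := mul_nonneg ht this
  simpa [mul_comm, mul_left_comm] using this

lemma isBoundedSV_iff_nonpos (W : Submodule ℝ (E → ℝ)) (z α : E → ℝ) :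
    IsBoundedSV W z α ↔ ∀ u ∈ cone W α, dot z u ≤ 0 := by
  constructor
  · rintro ⟨M, hM⟩ u hu
    by_contra h
    push_neg at h
    have hM0 : 0 ≤ M := by
      have := hM ⟨0, zero_mem_cone W α, rfl⟩
      simpa [dot] using this
    set t : ℝ := M / dot z u + 1 with ht
    have htpos : 0 < t := by positivity
    have hmem : t • u ∈ cone W α := cone_smul htpos.le hu
    have h2 : dot z (t • u) ≤ M := hM ⟨t • u, hmem, rfl⟩
    rw [dot_smul_right] at h2
    have : (M / dot z u + 1) * dot z u ≤ M := h2
    rw [add_mul, div_mul_cancel₀ _ (ne_of_gt h), one_mul] at this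
    linarith
  · intro h
    exact ⟨0, by rintro x ⟨u, hu, rfl⟩; exact h u hu⟩

end aux

lemma strict_neg {E : Type*} [Fintype E] (W : Submodule ℝ (E → ℝ)) (z α : E → ℝ)
    (hα : ∀ e, α e = 1 ∨ α e = -1)
    (hz : ∀ χ : E → ℝ, IsCircuit (perp W) χ → dot z χ ≠ 0)
    (hP : ∀ u ∈ cone W α, dot z u ≤ 0) :
    ∀ u ∈ cone W α, u ≠ 0 → dot z u < 0 := by
  classical
  by_contra hcon
  push_neg at hcon
  obtain ⟨u₀, hu₀c, hu₀ne, hu₀z⟩ := hcon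
  have hu₀z' : dot z u₀ = 0 := le_antisymm (hP u₀ hu₀c) hu₀z
  have hαabs : ∀ e, |α e| = 1 := fun e => by rcases hα e with h | h <;> simp [h]
  have hαne : ∀ e, α e ≠ 0 := fun e => by rcases hα e with h | h <;> simp [h]
  set Fs : (E → ℝ) → Finset E := fun v => Finset.univ.filter (fun e => v e ≠ 0) with hFs
  have hFsmem : ∀ v : E → ℝ, ∀ e, e ∈ Fs v ↔ v e ≠ 0 := fun v e => by simp [hFs]
  set S : Set (E → ℝ) := {u | u ∈ cone W α ∧ dot z u = 0 ∧ u ≠ 0} with hS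
  set N : Set ℕ := {n | ∃ u ∈ S, (Fs u).card = n} with hN
  have hNne : N.Nonempty := ⟨_, u₀, ⟨hu₀c, hu₀z', hu₀ne⟩, rfl⟩
  obtain ⟨u, huS, hucard⟩ := Nat.sInf_mem hNne
  have hmin : ∀ v ∈ S, sInf N ≤ (Fs v).card := fun v hv => Nat.sInf_le ⟨v, hv, rfl⟩
  obtain ⟨huc, huz, hune⟩ := huS
  have hpos : ∀ e, u e ≠ 0 → 0 < α e * u e := fun e he =>
    lt_of_le_of_ne (huc.2 e) (Ne.symm (mul_ne_zero (hαne e) he))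
  -- Claim (a): any w ∈ perp W with support inside supp u has dot z w ≤ 0
  have claimA : ∀ w ∈ perp W, {e | w e ≠ 0} ⊆ {e | u e ≠ 0} → dot z w ≤ 0 := by
    intro w hw hsub
    by_contra hdz
    push_neg at hdz
    obtain ⟨e', he'⟩ := Function.ne_iff.mp hune
    have he'' : u e' ≠ 0 := by simpa using he'
    have hsUne : (Fs u).Nonempty := ⟨e', (hFsmem u e').mpr he''⟩
    set m : ℝ := (Fs u).inf' hsUne (fun e => α e * u e) with hm
    have hmpos : 0 < m := by
      rw [hm, Finset.lt_inf'_iff]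
      exact fun e he => hpos e ((hFsmem u e).mp he)
    set t : ℝ := m / (‖w‖ + 1) with ht
    have hwnn : (0:ℝ) ≤ ‖w‖ := norm_nonneg w
    have htpos : 0 < t := by rw [ht]; positivity
    have htw : t * (‖w‖ + 1) = m := div_mul_cancel₀ _ (by positivity)
    have hmemb : u + t • w ∈ cone W α := by
      refine ⟨perp_add huc.1 (perp_smul t hw), fun e => ?_⟩
      by_cases he : u e = 0
      · have hwe : w e = 0 := by
          by_contra h
          exact (hsub h) he
        simp [he, hwe]
      · have h1 : m ≤ α e * u e := Finset.inf'_le _ ((hFsmem u e).mpr he)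
        have h2 : |w e| ≤ ‖w‖ := by
          simpa [Real.norm_eq_abs] using norm_le_pi_norm w e
        have h5 : -|w e| ≤ α e * w e := by
          have := neg_abs_le (α e * w e)
          rwa [abs_mul, hαabs, one_mul] at this
        have key : 0 ≤ α e * u e + t * (α e * w e) := by
          nlinarith [mul_le_mul_of_nonneg_left h2 htpos.le,
            mul_le_mul_of_nonneg_left h5 htpos.le]
        have hexp : α e * ((u + t • w) e) = α e * u e + t * (α e * w e) := by
          simp only [Pi.add_apply, Pi.smul_apply, smul_eq_mul]; ring
        linarith [key, hexp.ge, hexp.le]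
      -- end signs
    have hle := hP _ hmemb
    rw [dot_add_right, dot_smul_right, huz] at hle
    nlinarith
  have claimA' : ∀ w ∈ perp W, {e | w e ≠ 0} ⊆ {e | u e ≠ 0} → dot z w = 0 := by
    intro w hw hsub
    have h1 := claimA w hw hsub
    have h2 := claimA (-w) (perp_neg hw) (by
      intro e he
      apply hsub
      simp only [Set.mem_setOf_eq, Pi.neg_apply, neg_ne_zero] at he ⊢
      exact he)
    rw [dot_neg_right] at h2
    linarith
  -- Claim (b): u is a circuit of perp W
  have hcir : IsCircuit (perp W) u := by
    refine ⟨huc.1, hune, ?_⟩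
    intro w hw hwne hsub
    by_contra hne_supp
    have hss : {e | w e ≠ 0} ⊂ {e | u e ≠ 0} := hsub.ssubset_of_ne hne_supp
    obtain ⟨e₀, he₀u, he₀w⟩ := Set.exists_of_ssubset hss
    have hwe₀ : w e₀ = 0 := by simpa using he₀w
    have hue₀ : u e₀ ≠ 0 := he₀u
    have hdzw : dot z w = 0 := claimA' w hw hsub
    obtain ⟨e₁, he₁⟩ := Function.ne_iff.mp hwne
    have hwe₁ : w e₁ ≠ 0 := by simpa using he₁
    set c : ℝ := if α e₁ * w e₁ < 0 then 1 else -1 with hc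
    have hcne : c ≠ 0 := by
      rw [hc]; split <;> norm_num
    set w' : E → ℝ := c • w with hw'
    have hw'perp : w' ∈ perp W := perp_smul c hw
    have hw'dz : dot z w' = 0 := by rw [hw', dot_smul_right, hdzw, mul_zero]
    have hw'e₀ : w' e₀ = 0 := by simp [hw', hwe₀]
    have hw'supp : ∀ e, w' e ≠ 0 ↔ w e ≠ 0 := by
      intro e
      simp [hw', smul_eq_mul, mul_ne_zero_iff, hcne]
    have hw'e₁ : α e₁ * w' e₁ < 0 := by
      have hne : α e₁ * w e₁ ≠ 0 := mul_ne_zero (hαne e₁) hwe₁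
      rw [hw', hc]
      by_cases h : α e₁ * w e₁ < 0
      · simp only [hw', if_pos h, one_smul]; exact h
      · have : 0 < α e₁ * w e₁ := lt_of_le_of_ne (not_lt.mp h) (Ne.symm hne)
        simp only [h, if_false, Pi.smul_apply, smul_eq_mul]
        nlinarith
    set F : Finset E := Finset.univ.filter (fun e => α e * w' e < 0) with hF
    have hFmem : ∀ e, e ∈ F ↔ α e * w' e < 0 := fun e => by simp [hF]
    have hFne : F.Nonempty := ⟨e₁, (hFmem e₁).mpr hw'e₁⟩
    have hFu : ∀ e ∈ F, u e ≠ 0 := by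
      intro e he
      have hne : w' e ≠ 0 := by
        intro h0
        have := (hFmem e).mp he
        rw [h0, mul_zero] at this
        exact lt_irrefl 0 this
      exact hsub ((hw'supp e).mp hne)
    set ts : ℝ := F.inf' hFne (fun e => (α e * u e) / (-(α e * w' e))) with hts
    have htspos : 0 < ts := by
      rw [hts, Finset.lt_inf'_iff]
      intro e he
      exact div_pos (hpos e (hFu e he)) (by linarith [(hFmem e).mp he])
    set v : E → ℝ := u + ts • w' with hv
    have hratio : ∀ e ∈ F, (α e * u e) / (-(α e * w' e)) * (α e * w' e) = -(α e * u e) := by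
      intro e he
      have hd : α e * w' e ≠ 0 := ne_of_lt ((hFmem e).mp he)
      field_simp
      rw [mul_div_assoc, div_self (right_ne_zero_of_mul hd), mul_one]
    have hvc : v ∈ cone W α := by
      refine ⟨perp_add huc.1 (perp_smul ts hw'perp), fun e => ?_⟩
      have hexp : α e * v e = α e * u e + ts * (α e * w' e) := by
        simp [hv, Pi.add_apply, Pi.smul_apply, smul_eq_mul]; ring
      by_cases he : e ∈ F
      · have hle : ts ≤ (α e * u e) / (-(α e * w' e)) := Finset.inf'_le _ he
        have hd : α e * w' e ≤ 0 := le_of_lt ((hFmem e).mp he)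
        have := mul_le_mul_of_nonpos_right hle hd
        rw [hratio e he] at this
        linarith [hexp.ge, hexp.le, huc.2 e]
      · have hd : 0 ≤ α e * w' e := not_lt.mp (fun h => he ((hFmem e).mpr h))
        have := mul_nonneg htspos.le hd
        linarith [hexp.ge, huc.2 e]
    have hvz : dot z v = 0 := by
      rw [hv, dot_add_right, dot_smul_right, huz, hw'dz, mul_zero, add_zero]
    have hvne : v ≠ 0 := by
      intro h0
      have : v e₀ = 0 := by rw [h0]; rfl
      rw [hv] at this
      simp [hw'e₀] at this
      exact hue₀ this
    obtain ⟨estar, hestarF, hestar⟩ := Finset.exists_mem_eq_inf' hFne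
      (fun e => (α e * u e) / (-(α e * w' e)))
    have hvestar : v estar = 0 := by
      have hd : α estar * w' estar ≠ 0 := ne_of_lt ((hFmem estar).mp hestarF)
      have hexp : α estar * v estar = α estar * u estar + ts * (α estar * w' estar) := by
        simp [hv, Pi.add_apply, Pi.smul_apply, smul_eq_mul]; ring
      have : ts * (α estar * w' estar) = -(α estar * u estar) := by
        rw [hts, hestar]
        exact hratio estar hestarF
      rw [this] at hexp
      have h0 : α estar * v estar = 0 := by linarith
      exact (mul_eq_zero.mp h0).resolve_left (hαne estar)
    have hsubF : Fs v ⊆ Fs u := by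
      intro e he
      rw [hFsmem] at he ⊢
      intro hue
      apply he
      have hwe : w e = 0 := by
        by_contra h
        exact (hsub h) hue
      have hw'e : w' e = 0 := by simp [hw', hwe]
      rw [hv]
      simp [hue, hw'e]
    have hssF : Fs v ⊂ Fs u := by
      refine ⟨hsubF, fun h => ?_⟩
      have h1 : estar ∈ Fs u := (hFsmem u estar).mpr (hFu estar hestarF)
      have h2 : estar ∉ Fs v := fun hh => ((hFsmem v estar).mp hh) hvestar
      exact h2 (h h1)
    have hcard : (Fs v).card < (Fs u).card := Finset.card_lt_card hssF
    have := hmin v ⟨hvc, hvz, hvne⟩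
    omega
  exact hz u hcir huz

lemma dot_sub_left {E : Type*} [Fintype E] (a b u : E → ℝ) :
    dot (a - b) u = dot a u - dot b u := by
  simp [dot, sub_mul, Finset.sum_sub_distrib]

lemma isClosed_cone {E : Type*} [Fintype E] (W : Submodule ℝ (E → ℝ)) (α : E → ℝ) :
    IsClosed (cone W α) := by
  have h1 : IsClosed (perp W) := by
    have heq : perp W = ⋂ (w : W), {u : E → ℝ | dot (w : E → ℝ) u = 0} := by
      ext u; simp [perp]
    rw [heq]
    exact isClosed_iInter fun w => isClosed_eq (continuous_dot_right _) continuous_const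
  have h2 : IsClosed {u : E → ℝ | ∀ e, 0 ≤ α e * u e} := by
    have heq : {u : E → ℝ | ∀ e, 0 ≤ α e * u e} = ⋂ e, {u : E → ℝ | 0 ≤ α e * u e} := by
      ext; simp
    rw [heq]
    exact isClosed_iInter fun e =>
      isClosed_le continuous_const (continuous_const.mul (continuous_apply e))
  have heq : cone W α = perp W ∩ {u : E → ℝ | ∀ e, 0 ≤ α e * u e} := rfl
  rw [heq]
  exact h1.inter h2

lemma ball_subset_T {E : Type*} [Fintype E] (W : Submodule ℝ (E → ℝ)) (z α : E → ℝ)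
    (hα : ∀ e, α e = 1 ∨ α e = -1)
    (hz : ∀ χ : E → ℝ, IsCircuit (perp W) χ → dot z χ ≠ 0)
    (hT : ∀ u ∈ cone W α, dot z u ≤ 0) :
    ∃ δ > 0, ∀ z' : E → ℝ, dist z' z < δ → ∀ u ∈ cone W α, dot z' u ≤ 0 := by
  by_cases htriv : ∀ u ∈ cone W α, u = 0
  · exact ⟨1, one_pos, fun z' _ u hu => by rw [htriv u hu, dot_zero_right]⟩
  push_neg at htriv
  obtain ⟨u₁, hu₁, hu₁ne⟩ := htriv
  have hnu₁ : (0:ℝ) < ‖u₁‖ := norm_pos_iff.mpr hu₁ne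
  set K : Set (E → ℝ) := cone W α ∩ {u : E → ℝ | ‖u‖ = 1} with hK
  have hKne : K.Nonempty := by
    refine ⟨‖u₁‖⁻¹ • u₁, cone_smul (inv_nonneg.mpr hnu₁.le) hu₁, ?_⟩
    rw [Set.mem_setOf_eq, norm_smul, norm_inv, norm_norm, inv_mul_cancel₀ hnu₁.ne']
  have hKcl : IsClosed K :=
    (isClosed_cone W α).inter (isClosed_eq continuous_norm continuous_const)
  have hKb : K ⊆ Metric.closedBall 0 1 := fun u hu => by
    simp [Metric.mem_closedBall, dist_zero_right, hu.2.le]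
  have hKcomp : IsCompact K := (isCompact_closedBall (0 : E → ℝ) 1).of_isClosed_subset hKcl hKb
  obtain ⟨umax, humax, hmax⟩ :=
    hKcomp.exists_isMaxOn hKne (continuous_dot_right z).continuousOn
  have humaxne : umax ≠ 0 := by
    intro h0
    have := humax.2
    rw [h0] at this
    simp at this
  have hmaxneg : dot z umax < 0 := strict_neg W z α hα hz hT umax humax.1 humaxne
  set ε : ℝ := -dot z umax with hε
  have hεpos : 0 < ε := by rw [hε]; linarith
  set C : ℝ := (Fintype.card E : ℝ) with hC
  have hCnn : 0 ≤ C := by rw [hC]; positivity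
  set δ : ℝ := ε / (C + 1) with hδ
  have hδpos : 0 < δ := by rw [hδ]; positivity
  have hδε : δ * (C + 1) = ε := div_mul_cancel₀ _ (by positivity)
  refine ⟨δ, hδpos, fun z' hz' u hu => ?_⟩
  rcases eq_or_ne u 0 with rfl | hune
  · rw [dot_zero_right]
  have hnu : (0:ℝ) < ‖u‖ := norm_pos_iff.mpr hune
  set u' : E → ℝ := ‖u‖⁻¹ • u with hu'
  have hu'K : u' ∈ K := by
    refine ⟨cone_smul (inv_nonneg.mpr hnu.le) hu, ?_⟩
    rw [Set.mem_setOf_eq, hu', norm_smul, norm_inv, norm_norm, inv_mul_cancel₀ hnu.ne']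
  have h1 : dot z u' ≤ -ε := by
    have := hmax hu'K
    rw [hε]; simp only [Set.mem_setOf_eq] at this; linarith
  have hbound : ∀ e, |u' e| ≤ 1 := by
    intro e
    have := norm_le_pi_norm u' e
    rw [Real.norm_eq_abs] at this
    rw [hu'K.2] at this
    exact this
  have h2 : |dot (z' - z) u'| ≤ C * ‖z' - z‖ := by
    calc |dot (z' - z) u'| ≤ ∑ e, |(z' - z) e * u' e| := Finset.abs_sum_le_sum_abs _ _
      _ ≤ ∑ _e : E, ‖z' - z‖ * 1 := by
          refine Finset.sum_le_sum fun e _ => ?_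
          rw [abs_mul]
          refine mul_le_mul ?_ (hbound e) (abs_nonneg _) (norm_nonneg _)
          have := norm_le_pi_norm (z' - z) e
          rwa [Real.norm_eq_abs] at this
      _ = C * ‖z' - z‖ := by
          rw [Finset.sum_const, Finset.card_univ, nsmul_eq_mul, mul_one, hC]
  have h3 : dot z' u' = dot z u' + dot (z' - z) u' := by
    rw [dot_sub_left]; ring
  have hdist : ‖z' - z‖ < δ := by rwa [← dist_eq_norm]
  have hnn : (0:ℝ) ≤ ‖z' - z‖ := norm_nonneg _
  have h4 : dot z' u' ≤ 0 := by
    have habs : dot (z' - z) u' ≤ C * ‖z' - z‖ := (abs_le.mp h2).2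
    nlinarith [mul_le_mul_of_nonneg_left hdist.le hCnn]
  have hu_eq : u = ‖u‖ • u' := by
    rw [hu', smul_inv_smul₀ hnu.ne']
  rw [hu_eq, dot_smul_right]
  exact mul_nonpos_of_nonneg_of_nonpos hnu.le h4

/-- The set of bounded chambers depends only on the equivariant chamber of the
cocharacter: if `z₀` and `z₁` lie in the same connected component of the
complement of the root hyperplanes `χᗮ` (for `χ` a cocircuit, i.e. a circuit of
`Wᗮ`), then a sign vector `α` is `z₀`-bounded iff it is `z₁`-bounded. -/
theorem bounded_depends_only_on_equivariant_chamber {E : Type*} [Fintype E]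
    (W : Submodule ℝ (E → ℝ)) (z₀ z₁ : E → ℝ)
    (hcc : z₁ ∈ connectedComponentIn
      {z : E → ℝ | ∀ χ : E → ℝ, IsCircuit (perp W) χ → dot z χ ≠ 0} z₀) :
    ∀ α : E → ℝ, (∀ e, α e = 1 ∨ α e = -1) →
      (IsBoundedSV W z₀ α ↔ IsBoundedSV W z₁ α) := by
  classical
  set Ω : Set (E → ℝ) := {z | ∀ χ : E → ℝ, IsCircuit (perp W) χ → dot z χ ≠ 0} with hΩ
  have hz₀Ω : z₀ ∈ Ω := (connectedComponentIn_nonempty_iff).mp ⟨z₁, hcc⟩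
  intro α hα
  set T : Set (E → ℝ) := {z | ∀ u ∈ cone W α, dot z u ≤ 0} with hT
  have hTclosed : IsClosed T := by
    have heq : T = ⋂ u ∈ cone W α, {z : E → ℝ | dot z u ≤ 0} := by
      ext zz; simp [hT]
    rw [heq]
    exact isClosed_biInter fun u _ => isClosed_le (continuous_dot_left u) continuous_const
  have hkey : ∀ z ∈ Ω, z ∈ T → z ∈ interior T := by
    intro z hzΩ hzT
    obtain ⟨δ, hδ, hball⟩ := ball_subset_T W z α hα hzΩ hzT
    refine mem_interior.mpr ⟨Metric.ball z δ, ?_, Metric.isOpen_ball, Metric.mem_ball_self hδ⟩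
    intro z' hz' u hu
    exact hball z' (by simpa [Metric.mem_ball, dist_comm] using hz') u hu
  have hccsub : connectedComponentIn Ω z₀ ⊆ Ω := connectedComponentIn_subset _ _
  have hcon : IsPreconnected (connectedComponentIn Ω z₀) :=
    (isConnected_connectedComponentIn_iff.mpr hz₀Ω).isPreconnected
  have hcover : connectedComponentIn Ω z₀ ⊆ interior T ∪ Tᶜ := by
    intro x hx
    by_cases hxT : x ∈ T
    · exact Or.inl (hkey x (hccsub hx) hxT)
    · exact Or.inr hxT
  have hdisj : Disjoint (interior T) Tᶜ :=
    disjoint_compl_right.mono_left interior_subset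
  have hz₀cc : z₀ ∈ connectedComponentIn Ω z₀ := mem_connectedComponentIn hz₀Ω
  have hiff : z₀ ∈ T ↔ z₁ ∈ T := by
    by_cases h0 : z₀ ∈ T
    · have hsub := hcon.subset_left_of_subset_union isOpen_interior hTclosed.isOpen_compl
        hdisj hcover ⟨z₀, hz₀cc, hkey z₀ hz₀Ω h0⟩
      exact ⟨fun _ => interior_subset (hsub hcc), fun _ => h0⟩
    · have hcover' : connectedComponentIn Ω z₀ ⊆ Tᶜ ∪ interior T := by
        rw [Set.union_comm]; exact hcover
      have hsub := hcon.subset_left_of_subset_union hTclosed.isOpen_compl isOpen_interior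
        hdisj.symm hcover' ⟨z₀, hz₀cc, h0⟩
      exact ⟨fun h => absurd h h0, fun h => absurd h (hsub hcc)⟩
  rw [isBoundedSV_iff_nonpos, isBoundedSV_iff_nonpos]
  exact hiff
end
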